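/- If I is a G-indexing system, then the relation K →_I H (defined by K ⊆ H and H/K ∈ I(H)) is a partial order on the set of subgroups of G that refines the subset relation. -/
import Mathlib


open Pointwise

/-- Conjugate of a subgroup: `conjS g H = g H g⁻¹`. -/
def conjS {G : Type} [Group G] (g : G) (H : Subgroup G) : Subgroup G :=
  MulAut.conj g • H

/-- The trivial action of a group on a type. -/
def trivialSMul (H : Type) [Group H] (X : Type) : MulAction H X where
  smul := fun _ x => x
  one_smul := fun _ => rfl
  mul_smul := fun _ _ _ => rfl

/-- Application of an explicitly given action. -/
def actSMul {H X : Type} [Group H] (a : MulAction H X) (h : H) (x : X) : X :=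
  letI := a; h • x

/-- Restriction of an action along a group homomorphism. -/
def resAction {K H : Type} [Group K] [Group H] (φ : K →* H) (X : Type)
    (a : MulAction H X) : MulAction K X :=
  letI := a; MulAction.compHom X φ

/-- The disjoint union of two actions. -/
def sumAction {H X Y : Type} [Group H] (aX : MulAction H X) (aY : MulAction H Y) :
    MulAction H (X ⊕ Y) :=
  letI := aX; letI := aY
  { smul := fun h p => Sum.map (fun x => h • x) (fun y => h • y) p
    one_smul := by rintro (x | y) <;> simp
    mul_smul := by rintro h h' (x | y) <;> simp [mul_smul] }

/-- A map is equivariant for two explicitly given actions. -/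
def IsEquivariant {H X Y : Type} [Group H] (aX : MulAction H X)
    (aY : MulAction H Y) (f : X → Y) : Prop :=
  ∀ (h : H) (x : X), f (actSMul aX h x) = actSMul aY h (f x)

/-- The setoid on `H × X` whose quotient is the induced `H`-set
`ind_K^H X = H ×_K X` of a `K`-set `X` along `K ≤ H`. -/
def indSetoid (H : Type) [Group H] (K : Subgroup H) (X : Type)
    (a : MulAction K X) : Setoid (H × X) :=
  letI := a
  { r := fun p q => ∃ k : K, p.1 * k = q.1 ∧ k • q.2 = p.2
    iseqv := by
      constructor
      · exact fun p => ⟨1, by simp, by simp⟩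
      · rintro p q ⟨k, hk1, hk2⟩
        refine ⟨k⁻¹, ?_, ?_⟩
        · rw [← hk1]; simp [mul_assoc]
        · rw [← hk2]; simp
      · rintro p q r ⟨k, hk1, hk2⟩ ⟨l, hl1, hl2⟩
        refine ⟨k * l, ?_, ?_⟩
        · rw [← hl1, ← hk1]; simp [mul_assoc]
        · rw [← hk2, ← hl2]; simp [mul_smul] }

/-- The underlying set of the induced `H`-set `ind_K^H X`. -/
def IndType (H : Type) [Group H] (K : Subgroup H) (X : Type)
    (a : MulAction K X) : Type :=
  Quotient (indSetoid H K X a)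

instance (H : Type) [Group H] [Finite H] (K : Subgroup H) (X : Type)
    [Finite X] (a : MulAction K X) : Finite (IndType H K X a) :=
  Quotient.finite _

/-- The `H`-action on the induced `H`-set `ind_K^H X`. -/
def indAction (H : Type) [Group H] (K : Subgroup H) (X : Type)
    (a : MulAction K X) : MulAction H (IndType H K X a) where
  smul h := Quotient.map (fun p => (h * p.1, p.2))
    (by rintro p q ⟨k, hk1, hk2⟩; exact ⟨k, by rw [mul_assoc, hk1], hk2⟩)
  one_smul t := Quotient.inductionOn t fun p => by
    show Quotient.map _ _ ⟦p⟧ = ⟦p⟧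
    simp
  mul_smul g h t := Quotient.inductionOn t fun p => by
    show Quotient.map _ _ ⟦p⟧ = Quotient.map _ _ (Quotient.map _ _ ⟦p⟧)
    simp [mul_assoc]

/-- A `G`-indexing system: for each subgroup `H ≤ G` a class of finite `H`-sets
containing all trivial sets and closed under isomorphism, restriction,
conjugation, subobjects, finite coproducts, and self-induction. -/
structure IndexingSystem (G : Type) [Group G] [Finite G] where
  mem : ∀ (H : Subgroup G) (X : Type), Finite X → MulAction H X → Prop
  mem_trivial : ∀ (H : Subgroup G) (X : Type) (fX : Finite X),
    mem H X fX (trivialSMul H X)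
  mem_iso : ∀ (H : Subgroup G) (X Y : Type) (fX : Finite X) (fY : Finite Y)
    (aX : MulAction H X) (aY : MulAction H Y) (e : X ≃ Y),
    IsEquivariant aX aY e → mem H X fX aX → mem H Y fY aY
  mem_res : ∀ (K H : Subgroup G) (hKH : K ≤ H) (X : Type) (fX : Finite X)
    (aX : MulAction H X), mem H X fX aX →
    mem K X fX (resAction (Subgroup.inclusion hKH) X aX)
  mem_conj : ∀ (H : Subgroup G) (g : G) (X : Type) (fX : Finite X)
    (aX : MulAction H X), mem H X fX aX →
    mem (conjS g H) X fX
      (resAction ((Subgroup.equivSMul (MulAut.conj g) H).symm.toMonoidHom) X aX)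
  mem_sub : ∀ (H : Subgroup G) (X Y : Type) (fX : Finite X) (fY : Finite Y)
    (aX : MulAction H X) (aY : MulAction H Y) (f : X → Y),
    Function.Injective f → IsEquivariant aX aY f →
    mem H Y fY aY → mem H X fX aX
  mem_sum : ∀ (H : Subgroup G) (X Y : Type) (fX : Finite X) (fY : Finite Y)
    (aX : MulAction H X) (aY : MulAction H Y),
    mem H X fX aX → mem H Y fY aY →
    mem H (X ⊕ Y) inferInstance (sumAction aX aY)
  mem_selfind : ∀ (K H : Subgroup G) (hKH : K ≤ H) (X : Type) (fX : Finite X)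
    (aX : MulAction K X),
    mem K X fX aX →
    mem H (H ⧸ K.subgroupOf H) inferInstance inferInstance →
    mem H (IndType H (K.subgroupOf H) X
        (resAction (Subgroup.subgroupOfEquivOfLe hKH).toMonoidHom X aX))
      inferInstance
      (indAction H (K.subgroupOf H) X
        (resAction (Subgroup.subgroupOfEquivOfLe hKH).toMonoidHom X aX))

/-- The graph of an indexing system: `K →_I H` iff `K ≤ H` and the orbit
`H/K` is admissible for `I`. -/
def IndexingSystem.grel {G : Type} [Group G] [Finite G] (I : IndexingSystem G)
    (K H : Subgroup G) : Prop :=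
  K ≤ H ∧ I.mem H (H ⧸ K.subgroupOf H) inferInstance inferInstance


section Aux

variable {G : Type} [Group G] [Finite G]

theorem refl_mem (I : IndexingSystem G) (H : Subgroup G) :
    I.mem H (H ⧸ H.subgroupOf H) inferInstance inferInstance := by
  refine I.mem_iso H (H ⧸ H.subgroupOf H) (H ⧸ H.subgroupOf H) inferInstance inferInstance
    (trivialSMul H _) inferInstance (Equiv.refl _) ?_
    (I.mem_trivial H _ inferInstance)
  intro h x
  refine Quotient.inductionOn x fun g => ?_
  show (QuotientGroup.mk g : H ⧸ H.subgroupOf H) = h • QuotientGroup.mk g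
  have : h • (QuotientGroup.mk g : H ⧸ H.subgroupOf H) = QuotientGroup.mk (h * g) := rfl
  rw [this]
  exact (QuotientGroup.eq.mpr (by simp [Subgroup.mem_subgroupOf])).symm

theorem trans_mem (I : IndexingSystem G) {J K H : Subgroup G}
    (hJK : J ≤ K) (hKH : K ≤ H)
    (h1 : I.mem K (K ⧸ J.subgroupOf K) inferInstance inferInstance)
    (h2 : I.mem H (H ⧸ K.subgroupOf H) inferInstance inferInstance) :
    I.mem H (H ⧸ J.subgroupOf H) inferInstance inferInstance := by
  set a : MulAction (K.subgroupOf H) (K ⧸ J.subgroupOf K) :=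
    resAction (Subgroup.subgroupOfEquivOfLe hKH).toMonoidHom (K ⧸ J.subgroupOf K)
      inferInstance with ha
  have hind := I.mem_selfind K H hKH (K ⧸ J.subgroupOf K) inferInstance inferInstance h1 h2
  -- map `H/J → Ind_K^H (K/J)`, `hJ ↦ [(h, [1])]`
  set f : H ⧸ J.subgroupOf H → IndType H (K.subgroupOf H) (K ⧸ J.subgroupOf K) a :=
    Quotient.lift
      (fun h : H => (Quotient.mk (indSetoid H (K.subgroupOf H) (K ⧸ J.subgroupOf K) a)
        (h, QuotientGroup.mk 1)))
      (by
        intro x y hxy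
        have hxy' : x⁻¹ * y ∈ J.subgroupOf H := (QuotientGroup.leftRel_apply).mp hxy
        refine Quotient.sound ?_
        refine ⟨⟨x⁻¹ * y, hJK hxy'⟩, by group, ?_⟩
        show (Subgroup.subgroupOfEquivOfLe hKH ⟨x⁻¹ * y, hJK hxy'⟩) •
          (QuotientGroup.mk 1 : K ⧸ J.subgroupOf K) = QuotientGroup.mk 1
        have : (Subgroup.subgroupOfEquivOfLe hKH ⟨x⁻¹ * y, hJK hxy'⟩) •
            (QuotientGroup.mk 1 : K ⧸ J.subgroupOf K)
            = QuotientGroup.mk ((Subgroup.subgroupOfEquivOfLe hKH ⟨x⁻¹ * y, hJK hxy'⟩) * 1) :=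
          rfl
        rw [this]
        refine QuotientGroup.eq.mpr ?_
        simp only [mul_one]
        simpa [Subgroup.mem_subgroupOf, Subgroup.subgroupOfEquivOfLe] using hxy') with hf
  refine I.mem_sub H (H ⧸ J.subgroupOf H) _ inferInstance inferInstance
    inferInstance (indAction H (K.subgroupOf H) (K ⧸ J.subgroupOf K) a) f ?_ ?_ hind
  · -- injective
    intro x y hxy
    refine Quotient.inductionOn₂ x y (fun g h hgh => ?_) hxy
    have := Quotient.exact hgh
    obtain ⟨k, hk1, hk2⟩ := this
    have hk2' : (((Subgroup.subgroupOfEquivOfLe hKH k : K) : G)) ∈ J := by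
      have : (Subgroup.subgroupOfEquivOfLe hKH k) •
          (QuotientGroup.mk 1 : K ⧸ J.subgroupOf K) = QuotientGroup.mk 1 := hk2
      have h2' : (QuotientGroup.mk ((Subgroup.subgroupOfEquivOfLe hKH k) * 1)
          : K ⧸ J.subgroupOf K) = QuotientGroup.mk 1 := this
      have := QuotientGroup.eq.mp h2'
      simpa [Subgroup.mem_subgroupOf] using this
    refine Quotient.sound ?_
    refine (QuotientGroup.leftRel_apply).mpr ?_
    have hgk : g * (k : H) = h := hk1
    have : g⁻¹ * h = (k : H) := by rw [← hgk]; group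
    rw [this]
    exact hk2'
  · -- equivariant
    intro h x
    refine Quotient.inductionOn x fun g => ?_
    rfl

end Aux

/-- If `I` is a `G`-indexing system then the relation
`K →_I H` (i.e. `K ≤ H` and `H/K ∈ I(H)`) is a partial order on the subgroups
of `G` refining the subset relation: it is reflexive, antisymmetric,
transitive, and `K →_I H` implies `K ≤ H`. -/
theorem stmt0 {G : Type} [Group G] [Finite G] (I : IndexingSystem G) :
    (∀ H : Subgroup G, I.grel H H) ∧
    (∀ K H : Subgroup G, I.grel K H → I.grel H K → K = H) ∧
    (∀ J K H : Subgroup G, I.grel J K → I.grel K H → I.grel J H) ∧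
    (∀ K H : Subgroup G, I.grel K H → K ≤ H) := by
  refine ⟨fun H => ⟨le_refl H, refl_mem I H⟩,
    fun K H h1 h2 => le_antisymm h1.1 h2.1,
    fun J K H h1 h2 => ⟨h1.1.trans h2.1, trans_mem I h1.1 h2.1 h1.2 h2.2⟩,
    fun K H h => h.1⟩
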